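/- In B = A⟨X⟩, the derivative operator commutes with the differential up to sign: d/dX(d^B b) = (-1)^{|X|} d^B(db/dX) for all b ∈ B. -/
import Mathlib


/-- In `B = A⟨X | dX = t⟩` (either parity of `|X|`), the
derivative operator commutes with the differential up to sign:
`d/dX(d^B b) = (-1)^{|X|} d^B(db/dX)` for all `b ∈ B`. -/
theorem derivative_commutes_with_differential
    {R B : Type} [CommRing R] [Ring B] [Algebra R B]
    (A : Subalgebra R B) (X t : B) (degX : ℤ)
    (d : B →ₗ[R] B)
    (hdA : ∀ a ∈ A, d a ∈ A) (ht : t ∈ A) (hdXt : d X = t) (hdt : d t = 0)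
    (DX : B →ₗ[R] B)
    (hcase :
      (Even degX ∧ ∃ Xp : ℕ → B, Xp 0 = 1 ∧ Xp 1 = X ∧
        (∀ a ∈ A, DX a = 0) ∧
        (∀ m : ℕ, ∀ a ∈ A, DX (Xp (m + 1) * a) = Xp m * a) ∧
        (∀ m : ℕ, ∀ a ∈ A, d (Xp (m + 1) * a) = Xp m * (t * a) + Xp (m + 1) * d a) ∧
        (∀ b : B, ∃ c : ℕ →₀ B, (∀ i, c i ∈ A) ∧ b = c.sum fun i a => Xp i * a))
      ∨
      (Odd degX ∧ X * X = 0 ∧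
        (∀ a₀ ∈ A, ∀ a₁ ∈ A, DX (a₀ + X * a₁) = a₁) ∧
        (∀ a₀ ∈ A, ∀ a₁ ∈ A, d (a₀ + X * a₁) = d a₀ + t * a₁ - X * d a₁) ∧
        (∀ b : B, ∃ a₀ ∈ A, ∃ a₁ ∈ A, b = a₀ + X * a₁))) :
    ∀ b : B, DX (d b) = ((degX.negOnePow : ℤˣ) : ℤ) • d (DX b) := by
  intro b
  rcases hcase with ⟨he, Xp, hXp0, hXp1, hDXA, hDXp, hdXp, hrep⟩ |
    ⟨ho, hXX, hDXo, hdo, hrepo⟩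
  · rw [Int.negOnePow_even _ he]
    simp only [Units.val_one, one_smul]
    have key : ∀ (i : ℕ) (a : B), a ∈ A → DX (d (Xp i * a)) = d (DX (Xp i * a)) := by
      intro i a ha
      match i with
      | 0 =>
        rw [hXp0, one_mul, hDXA _ ha, map_zero, hDXA _ (hdA _ ha)]
      | 1 =>
        have hta : t * a ∈ A := A.mul_mem ht ha
        have hda : d a ∈ A := hdA _ ha
        have h1 : d (Xp 1 * a) = Xp 0 * (t * a) + Xp 1 * d a := hdXp 0 _ ha
        have h2 : DX (Xp 1 * a) = Xp 0 * a := hDXp 0 _ ha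
        have h3 : DX (Xp 1 * d a) = Xp 0 * d a := hDXp 0 _ hda
        rw [h1, map_add, h3, hXp0, one_mul, one_mul, hDXA _ hta, zero_add, h2,
          hXp0, one_mul]
      | (m + 2) =>
        have hta : t * a ∈ A := A.mul_mem ht ha
        have hda : d a ∈ A := hdA _ ha
        have h1 : d (Xp (m + 2) * a) = Xp (m + 1) * (t * a) + Xp (m + 2) * d a :=
          hdXp (m + 1) _ ha
        have h2 : DX (Xp (m + 2) * a) = Xp (m + 1) * a := hDXp (m + 1) _ ha
        have h3 : DX (Xp (m + 2) * d a) = Xp (m + 1) * d a := hDXp (m + 1) _ hda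
        have h4 : DX (Xp (m + 1) * (t * a)) = Xp m * (t * a) := hDXp m _ hta
        have h5 : d (Xp (m + 1) * a) = Xp m * (t * a) + Xp (m + 1) * d a :=
          hdXp m _ ha
        rw [h1, map_add, h3, h4, h2, h5]
    obtain ⟨c, hcA, rfl⟩ := hrep b
    rw [map_finsuppSum d, map_finsuppSum DX, map_finsuppSum DX, map_finsuppSum d]
    exact Finsupp.sum_congr fun i _ => key i (c i) (hcA i)
  · rw [Int.negOnePow_odd _ ho]
    obtain ⟨a₀, ha₀, a₁, ha₁, rfl⟩ := hrepo b
    have hrw : d a₀ + t * a₁ - X * d a₁ = (d a₀ + t * a₁) + X * (-(d a₁)) := by rw [mul_neg, sub_eq_add_neg]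
    rw [hdo _ ha₀ _ ha₁, hrw,
      hDXo _ (A.add_mem (hdA _ ha₀) (A.mul_mem ht ha₁)) _ (A.neg_mem (hdA _ ha₁)),
      hDXo _ ha₀ _ ha₁]
    simp
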